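/- arXiv:1907.08369 — 3 statements merged into one kernel-verified Lean document; each statement's English description precedes it below -/
import Mathlib

section
/- For every real a > 0 and every real x > 0, we have x^a·γ(a, x)² − x^a·Γ(a)² + 2·γ(a, x)·Γ-upper(2a, x) > 0. -/
open Real MeasureTheory Filter

/-- The asymmetric loss function. -/
noncomputable def asymLoss (k₁ k₂ z : ℝ) : ℝ := if 0 ≤ z then k₁ * z else -k₂ * z

/-- The generalized Gaussian density with mean zero. -/
noncomputable def genGauss (a b z : ℝ) : ℝ :=
  (2 * a * b * Real.Gamma a)⁻¹ * Real.exp (-(|z / b| ^ (1 / a)))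

/-- The lower incomplete gamma function. -/
noncomputable def lowerGamma (p x : ℝ) : ℝ := ∫ t in (0:ℝ)..x, t ^ (p - 1) * Real.exp (-t)

/-- The upper incomplete gamma function. -/
noncomputable def upperGamma (p x : ℝ) : ℝ := ∫ t in Set.Ioi x, t ^ (p - 1) * Real.exp (-t)

/-- The sign function used in the paper: `1` for `c ≥ 0`, `-1` for `c < 0`. -/
noncomputable def Sgn (c : ℝ) : ℝ := if 0 ≤ c then 1 else -1

open Set Topology

lemma intStd {p x : ℝ} (hp : 0 < p) (hx : 0 ≤ x) :
    IntegrableOn (fun t => t ^ (p - 1) * Real.exp (-t)) (Set.Ioi x) :=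
  ((Real.GammaIntegral_convergent hp).mono_set (Set.Ioi_subset_Ioi hx)).congr_fun
    (fun _ _ => mul_comm _ _) measurableSet_Ioi

lemma intExp {x : ℝ} (hx : 0 ≤ x) :
    IntegrableOn (fun t => Real.exp (-t)) (Set.Ioi x) :=
  (intStd one_pos hx).congr_fun (fun t _ => by norm_num) measurableSet_Ioi

lemma intPow {p x : ℝ} (hp : 0 < p) (hx : 0 ≤ x) :
    IntegrableOn (fun t => t ^ p * Real.exp (-t)) (Set.Ioi x) := by
  have := intStd (p := p + 1) (by linarith) hx
  simpa using this

lemma intH {a x : ℝ} (ha : 0 < a) (hx : 0 < x) :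
    IntegrableOn (fun t => (t ^ a - x ^ a) * Real.exp (-t)) (Set.Ioi x) := by
  have h : IntegrableOn
      (fun t => t ^ a * Real.exp (-t) - x ^ a * Real.exp (-t)) (Set.Ioi x) :=
    (intPow ha hx.le).sub ((intExp hx.le).const_mul (x ^ a))
  exact IntegrableOn.congr_fun h (fun t _ => by ring) measurableSet_Ioi

lemma intH2 {a x : ℝ} (ha : 0 < a) (hx : 0 < x) :
    IntegrableOn (fun t => (t ^ a - x ^ a) ^ 2 * Real.exp (-t)) (Set.Ioi x) := by
  have h : IntegrableOn (fun t => t ^ (2 * a) * Real.exp (-t)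
      - 2 * x ^ a * (t ^ a * Real.exp (-t)) + x ^ a * x ^ a * Real.exp (-t)) (Set.Ioi x) :=
    ((intPow (by linarith : (0:ℝ) < 2 * a) hx.le).sub
      ((intPow ha hx.le).const_mul (2 * x ^ a))).add ((intExp hx.le).const_mul (x ^ a * x ^ a))
  refine h.congr_fun (fun t ht => ?_) measurableSet_Ioi
  have ht0 : 0 < t := hx.trans ht
  have h2a : t ^ (2 * a) = t ^ a * t ^ a := by
    rw [show 2 * a = a + a by ring, Real.rpow_add ht0]
  beta_reduce; rw [h2a]; ring

lemma hasDerivExpNeg (t : ℝ) : HasDerivAt (fun t : ℝ => Real.exp (-t)) (-Real.exp (-t)) t := by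
  simpa using ((hasDerivAt_id t).neg).exp

lemma ibpA {a x : ℝ} (ha : 0 < a) (hx : 0 < x) :
    (∫ t in Set.Ioi x, t ^ (a - 1) * Real.exp (-t))
      = (1 / a) * ∫ t in Set.Ioi x, (t ^ a - x ^ a) * Real.exp (-t) := by
  set f : ℝ → ℝ := fun t => -((t ^ a - x ^ a) / a) * Real.exp (-t) with hf
  have hderiv : ∀ t ∈ Set.Ioi x, HasDerivAt f
      ((t ^ a - x ^ a) / a * Real.exp (-t) - t ^ (a - 1) * Real.exp (-t)) t := by
    intro t ht
    have ht0 : 0 < t := hx.trans ht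
    have h1 : HasDerivAt (fun t : ℝ => -((t ^ a - x ^ a) / a)) (-(t ^ (a - 1))) t := by
      have h := (((Real.hasDerivAt_rpow_const (p := a)
        (Or.inl ht0.ne')).sub_const (x ^ a)).div_const a).fun_neg
      refine h.congr_deriv ?_
      field_simp
    have := h1.fun_mul (hasDerivExpNeg t)
    refine this.congr_deriv ?_
    ring
  have hcont : ContinuousWithinAt f (Set.Ici x) x := by
    apply ContinuousAt.continuousWithinAt
    exact ((((Real.continuousAt_rpow_const x a (Or.inl hx.ne')).sub
      continuousAt_const).div_const a).neg).mul
      ((Real.continuous_exp.comp continuous_neg).continuousAt)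
  have htend : Tendsto f atTop (𝓝 0) := by
    have t1 : Tendsto (fun t : ℝ => t ^ a * Real.exp (-t)) atTop (𝓝 0) := by
      simpa using tendsto_rpow_mul_exp_neg_mul_atTop_nhds_zero a 1 one_pos
    have t2 : Tendsto (fun t : ℝ => Real.exp (-t)) atTop (𝓝 0) :=
      Real.tendsto_exp_neg_atTop_nhds_zero
    have := (t1.const_mul (-(1 / a))).add (t2.const_mul (x ^ a / a))
    simp only [mul_zero, add_zero] at this
    exact this.congr (fun t => by rw [hf]; ring)
  have hint1 : IntegrableOn (fun t => (t ^ a - x ^ a) / a * Real.exp (-t)) (Set.Ioi x) := by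
    have h := (intH ha hx).const_mul (1 / a)
    exact IntegrableOn.congr_fun h (fun t _ => by ring) measurableSet_Ioi
  have f'int : IntegrableOn
      (fun t => (t ^ a - x ^ a) / a * Real.exp (-t) - t ^ (a - 1) * Real.exp (-t))
      (Set.Ioi x) := hint1.sub (intStd ha hx.le)
  have h0 := integral_Ioi_of_hasDerivAt_of_tendsto hcont hderiv f'int htend
  have hfx : f x = 0 := by simp [hf]
  rw [hfx, sub_zero, integral_sub hint1 (intStd ha hx.le)] at h0
  have heq : (∫ t in Set.Ioi x, (t ^ a - x ^ a) / a * Real.exp (-t))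
      = (1 / a) * ∫ t in Set.Ioi x, (t ^ a - x ^ a) * Real.exp (-t) := by
    rw [← integral_const_mul]
    exact setIntegral_congr_fun measurableSet_Ioi (fun t _ => by ring)
  rw [heq] at h0
  linarith

lemma ibpB {a x : ℝ} (ha : 0 < a) (hx : 0 < x) :
    (∫ t in Set.Ioi x, t ^ (2 * a - 1) * Real.exp (-t))
      - x ^ a * ∫ t in Set.Ioi x, t ^ (a - 1) * Real.exp (-t)
      = (1 / (2 * a)) * ∫ t in Set.Ioi x, (t ^ a - x ^ a) ^ 2 * Real.exp (-t) := by
  set f : ℝ → ℝ := fun t => -((t ^ a - x ^ a) ^ 2 / (2 * a)) * Real.exp (-t) with hf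
  have hderiv : ∀ t ∈ Set.Ioi x, HasDerivAt f
      ((t ^ a - x ^ a) ^ 2 / (2 * a) * Real.exp (-t)
        - (t ^ a - x ^ a) * t ^ (a - 1) * Real.exp (-t)) t := by
    intro t ht
    have ht0 : 0 < t := hx.trans ht
    have h1 : HasDerivAt (fun t : ℝ => -((t ^ a - x ^ a) ^ 2 / (2 * a)))
        (-((t ^ a - x ^ a) * t ^ (a - 1))) t := by
      have h := ((((Real.hasDerivAt_rpow_const (p := a)
        (Or.inl ht0.ne')).sub_const (x ^ a)).pow 2).div_const (2 * a)).fun_neg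
      refine h.congr_deriv ?_
      field_simp
      ring
    have := h1.fun_mul (hasDerivExpNeg t)
    refine this.congr_deriv ?_
    ring
  have hcont : ContinuousWithinAt f (Set.Ici x) x := by
    apply ContinuousAt.continuousWithinAt
    exact (((((Real.continuousAt_rpow_const x a (Or.inl hx.ne')).sub
      continuousAt_const).pow 2).div_const (2 * a)).neg).mul
      ((Real.continuous_exp.comp continuous_neg).continuousAt)
  have htend : Tendsto f atTop (𝓝 0) := by
    have t1 : Tendsto (fun t : ℝ => t ^ (2 * a) * Real.exp (-t)) atTop (𝓝 0) := by
      simpa using tendsto_rpow_mul_exp_neg_mul_atTop_nhds_zero (2 * a) 1 one_pos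
    have t2 : Tendsto (fun t : ℝ => t ^ a * Real.exp (-t)) atTop (𝓝 0) := by
      simpa using tendsto_rpow_mul_exp_neg_mul_atTop_nhds_zero a 1 one_pos
    have t3 : Tendsto (fun t : ℝ => Real.exp (-t)) atTop (𝓝 0) :=
      Real.tendsto_exp_neg_atTop_nhds_zero
    have h := ((t1.const_mul (-(1 / (2 * a)))).add (t2.const_mul (x ^ a / a))).add
      (t3.const_mul (-(x ^ a * x ^ a / (2 * a))))
    simp only [mul_zero, add_zero] at h
    apply h.congr'
    filter_upwards [eventually_gt_atTop 0] with t ht0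
    have h2a : t ^ (2 * a) = t ^ a * t ^ a := by
      rw [show 2 * a = a + a by ring, Real.rpow_add ht0]
    rw [hf]
    simp only
    rw [h2a]
    field_simp
    ring
  have hint2 : IntegrableOn
      (fun t => (t ^ a - x ^ a) ^ 2 / (2 * a) * Real.exp (-t)) (Set.Ioi x) := by
    have h := (intH2 ha hx).const_mul (1 / (2 * a))
    exact IntegrableOn.congr_fun h (fun t _ => by ring) measurableSet_Ioi
  have hintD : IntegrableOn
      (fun t => (t ^ a - x ^ a) * t ^ (a - 1) * Real.exp (-t)) (Set.Ioi x) := by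
    have h : IntegrableOn (fun t => t ^ (2 * a - 1) * Real.exp (-t)
        - x ^ a * (t ^ (a - 1) * Real.exp (-t))) (Set.Ioi x) :=
      (intStd (by linarith : (0:ℝ) < 2 * a) hx.le).sub ((intStd ha hx.le).const_mul (x ^ a))
    refine h.congr_fun (fun t ht => ?_) measurableSet_Ioi
    have ht0 : 0 < t := hx.trans ht
    have : t ^ (2 * a - 1) = t ^ a * t ^ (a - 1) := by
      rw [show 2 * a - 1 = a + (a - 1) by ring, Real.rpow_add ht0]
    beta_reduce; rw [this]; ring
  have f'int : IntegrableOn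
      (fun t => (t ^ a - x ^ a) ^ 2 / (2 * a) * Real.exp (-t)
        - (t ^ a - x ^ a) * t ^ (a - 1) * Real.exp (-t)) (Set.Ioi x) := hint2.sub hintD
  have h0 := integral_Ioi_of_hasDerivAt_of_tendsto hcont hderiv f'int htend
  have hfx : f x = 0 := by simp [hf]
  rw [hfx, sub_zero, integral_sub hint2 hintD] at h0
  have heq : (∫ t in Set.Ioi x, (t ^ a - x ^ a) ^ 2 / (2 * a) * Real.exp (-t))
      = (1 / (2 * a)) * ∫ t in Set.Ioi x, (t ^ a - x ^ a) ^ 2 * Real.exp (-t) := by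
    rw [← integral_const_mul]
    exact setIntegral_congr_fun measurableSet_Ioi (fun t _ => by ring)
  have heq2 : (∫ t in Set.Ioi x, (t ^ a - x ^ a) * t ^ (a - 1) * Real.exp (-t))
      = (∫ t in Set.Ioi x, t ^ (2 * a - 1) * Real.exp (-t))
        - x ^ a * ∫ t in Set.Ioi x, t ^ (a - 1) * Real.exp (-t) := by
    rw [← integral_const_mul, ← integral_sub (intStd (by linarith : (0:ℝ) < 2 * a) hx.le)
      ((intStd ha hx.le).const_mul (x ^ a))]
    refine setIntegral_congr_fun measurableSet_Ioi (fun t ht => ?_)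
    have ht0 : 0 < t := hx.trans ht
    have : t ^ (2 * a - 1) = t ^ a * t ^ (a - 1) := by
      rw [show 2 * a - 1 = a + (a - 1) by ring, Real.rpow_add ht0]
    rw [this]; ring
  rw [heq, heq2] at h0
  linarith

lemma intIoc {a x : ℝ} (ha : 0 < a) :
    IntegrableOn (fun t => t ^ (a - 1) * Real.exp (-t)) (Set.Ioc 0 x) :=
  ((Real.GammaIntegral_convergent ha).mono_set Set.Ioc_subset_Ioi_self).congr_fun
    (fun _ _ => mul_comm _ _) measurableSet_Ioc

lemma lowerGamma_gt {a x : ℝ} (ha : 0 < a) (hx : 0 < x) :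
    Real.exp (-x) * x ^ a / a < ∫ t in (0:ℝ)..x, t ^ (a - 1) * Real.exp (-t) := by
  rw [intervalIntegral.integral_of_le hx.le]
  have hf1 : IntegrableOn (fun t => t ^ (a - 1) * Real.exp (-t)) (Set.Ioc 0 x) := intIoc ha
  have hf2 : IntegrableOn (fun t => t ^ (a - 1) * Real.exp (-x)) (Set.Ioc 0 x) := by
    have h := intervalIntegral.intervalIntegrable_rpow' (a := 0) (b := x)
      (by linarith : (-1:ℝ) < a - 1)
    exact ((intervalIntegrable_iff_integrableOn_Ioc_of_le hx.le).mp h).mul_const _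
  have hpos : 0 < ∫ t in Set.Ioc 0 x,
      (t ^ (a - 1) * Real.exp (-t) - t ^ (a - 1) * Real.exp (-x)) := by
    have hf12 : IntegrableOn
        (fun t => t ^ (a - 1) * Real.exp (-t) - t ^ (a - 1) * Real.exp (-x))
        (Set.Ioc 0 x) := hf1.sub hf2
    rw [setIntegral_pos_iff_support_of_nonneg_ae ?h1 hf12]
    case h1 =>
      rw [EventuallyLE, ae_restrict_iff' measurableSet_Ioc]
      refine Eventually.of_forall fun t ht => ?_
      have h1 : (0:ℝ) ≤ t ^ (a - 1) := Real.rpow_nonneg ht.1.le _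
      have h2 : Real.exp (-x) ≤ Real.exp (-t) := Real.exp_le_exp.mpr (by linarith [ht.2])
      simp only [Pi.zero_apply]
      nlinarith
    · refine lt_of_lt_of_le ?_ (measure_mono (?_ : Set.Ioo 0 x ⊆ _))
      · rw [Real.volume_Ioo]
        simpa using hx
      · intro t ht
        refine ⟨?_, Set.Ioo_subset_Ioc_self ht⟩
        have h1 : (0:ℝ) < t ^ (a - 1) := Real.rpow_pos_of_pos ht.1 _
        have h2 : Real.exp (-x) < Real.exp (-t) := Real.exp_lt_exp.mpr (by linarith [ht.2])
        simp only [Function.mem_support]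
        nlinarith
  rw [integral_sub hf1 hf2] at hpos
  have hc : (∫ t in Set.Ioc 0 x, t ^ (a - 1) * Real.exp (-x))
      = Real.exp (-x) * x ^ a / a := by
    rw [← intervalIntegral.integral_of_le hx.le, intervalIntegral.integral_mul_const,
      integral_rpow (Or.inl (by linarith : (-1:ℝ) < a - 1))]
    rw [show a - 1 + 1 = a by ring, Real.zero_rpow ha.ne']
    ring
  rw [hc] at hpos
  linarith

lemma I2pos {a x : ℝ} (ha : 0 < a) (hx : 0 < x) :
    0 < ∫ t in Set.Ioi x, (t ^ a - x ^ a) ^ 2 * Real.exp (-t) := by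
  rw [setIntegral_pos_iff_support_of_nonneg_ae ?h1 (intH2 ha hx)]
  case h1 =>
    refine Eventually.of_forall fun t => ?_
    simp only [Pi.zero_apply]
    positivity
  · refine lt_of_lt_of_le ?_ (measure_mono (?_ : Set.Ioi x ⊆ _))
    · simp [Real.volume_Ioi]
    · intro t ht
      refine ⟨?_, ht⟩
      have h1 : x ^ a < t ^ a := Real.rpow_lt_rpow hx.le ht ha
      have h2 : (0:ℝ) < Real.exp (-t) := Real.exp_pos _
      simp only [Function.mem_support]
      exact ne_of_gt (mul_pos (pow_pos (sub_pos.mpr h1) 2) h2)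

lemma CSineq {a x : ℝ} (ha : 0 < a) (hx : 0 < x) :
    (∫ t in Set.Ioi x, (t ^ a - x ^ a) * Real.exp (-t)) ^ 2
      ≤ Real.exp (-x) * ∫ t in Set.Ioi x, (t ^ a - x ^ a) ^ 2 * Real.exp (-t) := by
  set I1 := ∫ t in Set.Ioi x, (t ^ a - x ^ a) * Real.exp (-t) with hI1
  set I2 := ∫ t in Set.Ioi x, (t ^ a - x ^ a) ^ 2 * Real.exp (-t) with hI2
  set m := Real.exp (-x) with hm
  have hm0 : 0 < m := Real.exp_pos _
  set c := I1 / m with hc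
  have h0 : 0 ≤ ∫ t in Set.Ioi x, ((t ^ a - x ^ a) - c) ^ 2 * Real.exp (-t) :=
    setIntegral_nonneg measurableSet_Ioi (fun t _ => mul_nonneg (sq_nonneg _) (Real.exp_pos _).le)
  have hexpand : (∫ t in Set.Ioi x, ((t ^ a - x ^ a) - c) ^ 2 * Real.exp (-t))
      = I2 - 2 * c * I1 + c ^ 2 * m := by
    rw [setIntegral_congr_fun measurableSet_Ioi (fun t _ => (by ring :
      ((t ^ a - x ^ a) - c) ^ 2 * Real.exp (-t)
        = (t ^ a - x ^ a) ^ 2 * Real.exp (-t)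
          - 2 * c * ((t ^ a - x ^ a) * Real.exp (-t)) + c ^ 2 * Real.exp (-t)))]
    have g1 : IntegrableOn (fun t => (t ^ a - x ^ a) ^ 2 * Real.exp (-t)
        - 2 * c * ((t ^ a - x ^ a) * Real.exp (-t))) (Set.Ioi x) :=
      (intH2 ha hx).sub ((intH ha hx).const_mul (2 * c))
    have g2 : IntegrableOn (fun t => c ^ 2 * Real.exp (-t)) (Set.Ioi x) :=
      (intExp hx.le).const_mul (c ^ 2)
    rw [integral_add g1 g2,
      integral_sub (intH2 ha hx) ((intH ha hx).const_mul (2 * c)),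
      integral_const_mul, integral_const_mul, integral_exp_neg_Ioi]
  rw [hexpand] at h0
  have e1 : c ^ 2 * m = I1 ^ 2 / m := by rw [hc, div_pow]; field_simp
  have e2 : 2 * c * I1 = 2 * (I1 ^ 2 / m) := by rw [hc]; field_simp
  rw [e1, e2] at h0
  have h1 : I1 ^ 2 / m ≤ I2 := by linarith
  have := (div_le_iff₀ hm0).mp h1
  linarith

lemma gammaSplit {a x : ℝ} (ha : 0 < a) (hx : 0 < x) :
    Real.Gamma a = (∫ t in (0:ℝ)..x, t ^ (a - 1) * Real.exp (-t))
      + ∫ t in Set.Ioi x, t ^ (a - 1) * Real.exp (-t) := by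
  rw [Real.Gamma_eq_integral ha]
  have h1 : (∫ t in Set.Ioi (0:ℝ), Real.exp (-t) * t ^ (a - 1))
      = ∫ t in Set.Ioi (0:ℝ), t ^ (a - 1) * Real.exp (-t) :=
    setIntegral_congr_fun measurableSet_Ioi (fun t _ => mul_comm _ _)
  rw [h1, ← Set.Ioc_union_Ioi_eq_Ioi hx.le,
    setIntegral_union Set.Ioc_disjoint_Ioi_same measurableSet_Ioi (intIoc ha)
      (intStd ha hx.le), intervalIntegral.integral_of_le hx.le]

theorem incomplete_gamma_inequality (a x : ℝ) (ha : 0 < a) (hx : 0 < x) :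
    x ^ a * (lowerGamma a x) ^ 2 - x ^ a * Real.Gamma a ^ 2
      + 2 * lowerGamma a x * upperGamma (2 * a) x > 0 := by
  set I1 := ∫ t in Set.Ioi x, (t ^ a - x ^ a) * Real.exp (-t) with hI1
  set I2 := ∫ t in Set.Ioi x, (t ^ a - x ^ a) ^ 2 * Real.exp (-t) with hI2
  have hU1 : upperGamma a x = (1 / a) * I1 := ibpA ha hx
  have hU2 : upperGamma (2 * a) x - x ^ a * upperGamma a x = (1 / (2 * a)) * I2 :=
    ibpB ha hx
  have hG : Real.Gamma a = lowerGamma a x + upperGamma a x := gammaSplit ha hx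
  have hlg : Real.exp (-x) * x ^ a / a < lowerGamma a x := lowerGamma_gt ha hx
  have hCS : I1 ^ 2 ≤ Real.exp (-x) * I2 := CSineq ha hx
  have hI2pos : 0 < I2 := I2pos ha hx
  have hxa : 0 < x ^ a := Real.rpow_pos_of_pos hx a
  have hU2' : upperGamma (2 * a) x = x ^ a * ((1 / a) * I1) + (1 / (2 * a)) * I2 := by
    rw [← hU1]; linarith
  have h7 : Real.exp (-x) * x ^ a < lowerGamma a x * a := (div_lt_iff₀ ha).mp hlg
  have h8 : Real.exp (-x) * x ^ a * I2 < lowerGamma a x * a * I2 :=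
    mul_lt_mul_of_pos_right h7 hI2pos
  have h9 : x ^ a * I1 ^ 2 ≤ x ^ a * (Real.exp (-x) * I2) :=
    mul_le_mul_of_nonneg_left hCS hxa.le
  have key : x ^ a * I1 ^ 2 < a * lowerGamma a x * I2 := by nlinarith
  have goal_eq : x ^ a * (lowerGamma a x) ^ 2 - x ^ a * Real.Gamma a ^ 2
      + 2 * lowerGamma a x * upperGamma (2 * a) x
      = (a * lowerGamma a x * I2 - x ^ a * I1 ^ 2) / a ^ 2 := by
    rw [hG, hU2', hU1]; field_simp; ring
  rw [gt_iff_lt, goal_eq]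
  exact div_pos (by linarith) (by positivity)
end

section
/- For every real a > 0, we have 2·Γ(2a) − a·Γ(a)² > 0. -/
open Real MeasureTheory Filter

open intervalIntegral in
lemma beta_real {u v : ℝ} (hu : 0 < u) (hv : 0 < v) :
    Real.Gamma u * Real.Gamma v
      = Real.Gamma (u + v) * ∫ t in (0:ℝ)..1, t ^ (u-1) * (1-t) ^ (v-1) := by
  have h := Complex.Gamma_mul_Gamma_eq_betaIntegral (s := (u:ℂ)) (t := (v:ℂ))
    (by simpa using hu) (by simpa using hv)
  have hbeta : Complex.betaIntegral u v
      = ((∫ t in (0:ℝ)..1, t ^ (u-1) * (1-t) ^ (v-1) : ℝ) : ℂ) := by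
    rw [Complex.betaIntegral, ← intervalIntegral.integral_ofReal]
    apply intervalIntegral.integral_congr
    intro x hx
    rw [Set.uIcc_of_le (by norm_num : (0:ℝ) ≤ 1)] at hx
    show (x:ℂ) ^ ((u:ℂ)-1) * (1-(x:ℂ)) ^ ((v:ℂ)-1) = ((x ^ (u-1) * (1-x) ^ (v-1) : ℝ) : ℂ)
    have e1 : ((u:ℂ) - 1) = ((u - 1 : ℝ) : ℂ) := by push_cast; ring
    have e2 : ((v:ℂ) - 1) = ((v - 1 : ℝ) : ℂ) := by push_cast; ring
    have e3 : (1 - (x:ℂ)) = ((1 - x : ℝ) : ℂ) := by push_cast; ring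
    rw [e1, e2, e3, ← Complex.ofReal_cpow hx.1,
      ← Complex.ofReal_cpow (by linarith [hx.2] : (0:ℝ) ≤ 1 - x), ← Complex.ofReal_mul]
  rw [hbeta] at h
  have := congrArg Complex.re h
  simpa [← Complex.ofReal_add, Complex.Gamma_ofReal, ← Complex.ofReal_mul] using this

open intervalIntegral in
theorem gamma_inequality (a : ℝ) (ha : 0 < a) :
    2 * Real.Gamma (2 * a) - a * Real.Gamma a ^ 2 > 0 := by
  have hb := beta_real ha (by linarith : (0:ℝ) < a + 1)
  simp only [add_sub_cancel_right] at hb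
  set I : ℝ := ∫ t in (0:ℝ)..1, t ^ (a-1) * (1-t) ^ a with hIdef
  rw [Real.Gamma_add_one ha.ne', show a + (a + 1) = 2*a + 1 by ring,
    Real.Gamma_add_one (by positivity : (2*a) ≠ 0)] at hb
  -- hb : Γ a * (a * Γ a) = 2*a * Γ (2*a) * I
  have hint1 : IntervalIntegrable (fun t : ℝ => t ^ (a-1)) volume 0 1 :=
    intervalIntegrable_rpow' (by linarith)
  have hint2 : IntervalIntegrable (fun t : ℝ => t ^ (a-1) * (1-t) ^ a) volume 0 1 := by
    rw [intervalIntegrable_iff, Set.uIoc_of_le (by norm_num : (0:ℝ) ≤ 1)]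
    have h1' : IntegrableOn (fun t : ℝ => t ^ (a-1)) (Set.Ioc 0 1) volume := by
      rw [← Set.uIoc_of_le (by norm_num : (0:ℝ) ≤ 1), ← intervalIntegrable_iff]
      exact hint1
    refine MeasureTheory.Integrable.mono h1' ?_ ?_
    · exact (by fun_prop : Measurable fun t:ℝ => t ^ (a-1) * (1-t) ^ a).aestronglyMeasurable
    · filter_upwards [ae_restrict_mem measurableSet_Ioc] with t ht
      have ht0 : 0 < t := ht.1
      have ht1 : t ≤ 1 := ht.2
      have h1 : (0:ℝ) ≤ (1-t) ^ a := Real.rpow_nonneg (by linarith) _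
      have h2 : (1-t) ^ a ≤ 1 := Real.rpow_le_one (by linarith) (by linarith) ha.le
      have h3 : (0:ℝ) < t ^ (a-1) := Real.rpow_pos_of_pos ht0 _
      simp only [Real.norm_eq_abs]
      rw [abs_of_nonneg (by positivity), abs_of_nonneg h3.le]
      nlinarith
  have hpos : (0:ℝ) < ∫ t in (0:ℝ)..1, (a * t ^ (a-1) - a * (t ^ (a-1) * (1-t) ^ a)) := by
    apply intervalIntegral_pos_of_pos_on ((hint1.const_mul a).sub (hint2.const_mul a))
    · intro x hx
      have h3 : (0:ℝ) < x ^ (a-1) := Real.rpow_pos_of_pos hx.1 _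
      have h2 : (1-x) ^ a < 1 := Real.rpow_lt_one (by linarith [hx.2]) (by linarith [hx.1]) ha
      have h1 : (0:ℝ) ≤ (1-x) ^ a := Real.rpow_nonneg (by linarith [hx.2]) _
      nlinarith [mul_pos (mul_pos ha h3) (by linarith : (0:ℝ) < 1 - (1-x)^a)]
    · norm_num
  rw [integral_sub (hint1.const_mul a) (hint2.const_mul a),
    intervalIntegral.integral_const_mul, intervalIntegral.integral_const_mul,
    integral_rpow (Or.inl (by linarith : (-1:ℝ) < a - 1))] at hpos
  simp only [sub_add_cancel, Real.one_rpow, Real.zero_rpow ha.ne'] at hpos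
  -- hpos : 0 < a * ((1 - 0)/a) - a * I
  have haI : a * I < 1 := by
    have : a * ((1 - 0)/a) = 1 := by field_simp; norm_num
    rw [this] at hpos
    linarith
  have hg : 0 < Real.Gamma (2*a) := Real.Gamma_pos_of_pos (by linarith)
  have hkey : a * Real.Gamma a ^ 2 = 2 * a * Real.Gamma (2*a) * I := by
    nlinarith [hb]
  nlinarith [hkey, haI, hg]
end

section
/- In the Laplace case a = 1: for every real c, ∫_{-∞}^{∞} L(z + c)·f(z) dz = L(c) + ((k₁ + k₂)·b/2)·exp(−|c/b|), where f(z) = (2·b)⁻¹·exp(−|z/b|). -/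
open Real MeasureTheory Filter Topology

open Set in
lemma asymLoss_neg (k₁ k₂ x : ℝ) : asymLoss k₁ k₂ (-x) = asymLoss k₂ k₁ x := by
  unfold asymLoss
  rcases lt_trichotomy x 0 with h | rfl | h
  · rw [if_pos (by linarith), if_neg (not_le.2 h)]; ring
  · simp
  · rw [if_neg (by simpa using not_le.2 h), if_pos h.le]; ring

lemma asymLoss_eq (k₁ k₂ x : ℝ) :
    asymLoss k₁ k₂ x = (k₁ - k₂) / 2 * x + (k₁ + k₂) / 2 * |x| := by
  unfold asymLoss
  split_ifs with h
  · rw [abs_of_nonneg h]; ring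
  · rw [abs_of_neg (not_le.1 h)]; ring

lemma hasDerivAt_linexp (A B β z : ℝ) :
    HasDerivAt (fun z => (A * z + B) * Real.exp (β * z))
      ((A + β * (A * z + B)) * Real.exp (β * z)) z := by
  have h1 : HasDerivAt (fun z : ℝ => A * z + B) A z := by
    simpa using ((hasDerivAt_id z).const_mul A).add_const B
  have h2 : HasDerivAt (fun z : ℝ => Real.exp (β * z)) (β * Real.exp (β * z)) z := by
    simpa [mul_comm, Function.comp_def] using (Real.hasDerivAt_exp (β * z)).comp z ((hasDerivAt_id z).const_mul β)
  have : HasDerivAt (fun z => (A * z + B) * Real.exp (β * z)) _ z := h1.mul h2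
  convert this using 1
  ring

lemma tendsto_linexp_atTop (A B b : ℝ) (hb : 0 < b) :
    Tendsto (fun z => (A * z + B) * Real.exp (-(1 / b) * z)) atTop (𝓝 0) := by
  have h1 : Tendsto (fun z : ℝ => z * Real.exp (-z)) atTop (𝓝 0) := by
    simpa using Real.tendsto_pow_mul_exp_neg_atTop_nhds_zero 1
  have hdiv : Tendsto (fun z : ℝ => z / b) atTop atTop := tendsto_id.atTop_div_const hb
  have h2 : Tendsto (fun z : ℝ => (z / b) * Real.exp (-(z / b))) atTop (𝓝 0) := h1.comp hdiv
  have h3 : Tendsto (fun z : ℝ => Real.exp (-(z / b))) atTop (𝓝 0) :=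
    Real.tendsto_exp_neg_atTop_nhds_zero.comp hdiv
  have h4 := (h2.const_mul (A * b)).add (h3.const_mul B)
  rw [mul_zero, mul_zero, add_zero] at h4
  refine h4.congr fun z => ?_
  have hb' : b ≠ 0 := hb.ne'
  have : -(z / b) = -(1 / b) * z := by field_simp
  rw [this]
  field_simp

/-- The key computation: integral and integrability of `k (z + d) e^{-z/b}` on `(a, ∞)`. -/
lemma linexp_piece (b k d a : ℝ) (hb : 0 < b) (hk : 0 ≤ k) (hda : 0 ≤ a + d) :
    IntegrableOn (fun z => k * (z + d) * Real.exp (-(1 / b) * z)) (Set.Ioi a) ∧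
      ∫ z in Set.Ioi a, k * (z + d) * Real.exp (-(1 / b) * z) =
        k * (b * (a + d) + b ^ 2) * Real.exp (-(1 / b) * a) := by
  have hb' : b ≠ 0 := hb.ne'
  have hderiv : ∀ x ∈ Set.Ici a,
      HasDerivAt (fun z => (-(k * b) * z + -(k * b) * (d + b)) * Real.exp (-(1 / b) * z))
        (k * (x + d) * Real.exp (-(1 / b) * x)) x := by
    intro x _
    have h := hasDerivAt_linexp (-(k * b)) (-(k * b) * (d + b)) (-(1 / b)) x
    have he : (-(k * b) + -(1 / b) * (-(k * b) * x + -(k * b) * (d + b))) = k * (x + d) := by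
      field_simp
      ring
    rwa [he] at h
  have hpos : ∀ x ∈ Set.Ioi a, 0 ≤ k * (x + d) * Real.exp (-(1 / b) * x) := by
    intro x hx
    have hx' : a < x := hx
    have : (0:ℝ) ≤ x + d := by linarith
    exact mul_nonneg (mul_nonneg hk this) (Real.exp_pos _).le
  have hten : Tendsto (fun z => (-(k * b) * z + -(k * b) * (d + b)) * Real.exp (-(1 / b) * z))
      atTop (𝓝 0) := tendsto_linexp_atTop _ _ _ hb
  refine ⟨integrableOn_Ioi_deriv_of_nonneg' hderiv hpos hten, ?_⟩
  rw [integral_Ioi_of_hasDerivAt_of_nonneg' hderiv hpos hten]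
  ring

lemma integrableOn_Iic_comp_neg {f : ℝ → ℝ} {a : ℝ}
    (h : IntegrableOn (fun x => f (-x)) (Set.Ioi (-a))) : IntegrableOn f (Set.Iic a) := by
  have h1 : IntegrableOn (fun x => f (-x)) (Set.Ici (-a)) :=
    (integrableOn_Ici_iff_integrableOn_Ioi (by simp)).2 h
  have h2 : (volume : Measure ℝ).restrict (Set.Iic a) =
      Measure.map Neg.neg ((volume : Measure ℝ).restrict (Set.Ici (-a))) := by
    conv_lhs => rw [← Measure.map_neg_eq_self (volume : Measure ℝ),
      measurableEmbedding_neg.restrict_map]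
    congr 1
    ext x
    simp [neg_le]
  rw [IntegrableOn, h2, measurableEmbedding_neg.integrable_map_iff]
  exact h1

open Set in
lemma laplace_loss_nonneg (b k₁ k₂ : ℝ) (hb : 0 < b) (hk₁ : 0 ≤ k₁) (hk₂ : 0 ≤ k₂)
    (c : ℝ) (hc : 0 ≤ c) :
    ∫ z, asymLoss k₁ k₂ (z + c) * ((2 * b)⁻¹ * Real.exp (-|z / b|)) =
      asymLoss k₁ k₂ c + (k₁ + k₂) * b / 2 * Real.exp (-|c / b|) := by
  have hb' : b ≠ 0 := hb.ne'
  set g : ℝ → ℝ := fun z => asymLoss k₁ k₂ (z + c) * ((2 * b)⁻¹ * Real.exp (-|z / b|)) with hg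
  -- piece on (0, ∞)
  obtain ⟨hint1, hval1⟩ := linexp_piece b (k₁ * (2 * b)⁻¹) c 0 hb
    (mul_nonneg hk₁ (by positivity)) (by linarith)
  have heq1 : EqOn g (fun z => k₁ * (2 * b)⁻¹ * (z + c) * Real.exp (-(1 / b) * z)) (Ioi 0) := by
    intro z hz
    have hz' : (0:ℝ) < z := hz
    have h1 : asymLoss k₁ k₂ (z + c) = k₁ * (z + c) := if_pos (by linarith)
    have h2 : |z / b| = z / b := abs_of_nonneg (div_nonneg hz'.le hb.le)
    simp only [hg, h1, h2]
    rw [show -(z / b) = -(1 / b) * z by field_simp]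
    ring
  have hint1' : IntegrableOn g (Ioi 0) :=
    (hint1.congr_fun (fun z hz => (heq1 hz).symm) measurableSet_Ioi)
  have hval1' : ∫ z in Ioi (0:ℝ), g z =
      k₁ * (2 * b)⁻¹ * (b * (0 + c) + b ^ 2) * Real.exp (-(1 / b) * 0) := by
    rw [setIntegral_congr_fun measurableSet_Ioi heq1]
    exact hval1
  -- piece on (-∞, -c], via reflection to (c, ∞)
  obtain ⟨hint2, hval2⟩ := linexp_piece b (k₂ * (2 * b)⁻¹) (-c) c hb
    (mul_nonneg hk₂ (by positivity)) (by linarith)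
  have heq2 : EqOn (fun x => g (-x))
      (fun x => k₂ * (2 * b)⁻¹ * (x + -c) * Real.exp (-(1 / b) * x)) (Ioi c) := by
    intro x hx
    have hx' : c < x := hx
    have h1 : asymLoss k₁ k₂ (-x + c) = -k₂ * (-x + c) := if_neg (by simp; linarith)
    have h2 : |(-x) / b| = x / b := by
      rw [neg_div, abs_neg, abs_of_nonneg (div_nonneg (by linarith) hb.le)]
    simp only [hg, h1, h2]
    rw [show -(x / b) = -(1 / b) * x by field_simp]
    ring
  have hint2' : IntegrableOn g (Iic (-c)) := by
    apply integrableOn_Iic_comp_neg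
    rw [neg_neg]
    exact hint2.congr_fun (fun x hx => (heq2 hx).symm) measurableSet_Ioi
  have hval2' : ∫ z in Iic (-c), g z =
      k₂ * (2 * b)⁻¹ * (b * (c + -c) + b ^ 2) * Real.exp (-(1 / b) * c) := by
    rw [← integral_comp_neg_Ioi, setIntegral_congr_fun measurableSet_Ioi heq2]
    exact hval2
  -- continuity of g
  have hcont : Continuous g := by
    have h1 : Continuous (asymLoss k₁ k₂) := by
      have he : asymLoss k₁ k₂ = fun x => (k₁ - k₂) / 2 * x + (k₁ + k₂) / 2 * |x| :=
        funext (asymLoss_eq k₁ k₂)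
      rw [he]; fun_prop
    rw [hg]
    exact (h1.comp (continuous_id.add continuous_const)).mul (by fun_prop)
  -- piece on (-c, 0]
  have hint3 : IntegrableOn g (Ioc (-c) 0) := hcont.integrableOn_Ioc
  have hval3 : ∫ z in Ioc (-c) 0, g z =
      (k₁ * (2 * b)⁻¹ * b * (0 + (c - b)) * Real.exp ((1 / b) * 0)) -
      (k₁ * (2 * b)⁻¹ * b * (-c + (c - b)) * Real.exp ((1 / b) * (-c))) := by
    rw [← intervalIntegral.integral_of_le (by linarith : -c ≤ (0:ℝ))]
    have heq3 : EqOn g (fun z => k₁ * (2 * b)⁻¹ * (z + c) * Real.exp ((1 / b) * z))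
        (uIcc (-c) 0) := by
      intro z hz
      rw [uIcc_of_le (by linarith : -c ≤ (0:ℝ))] at hz
      obtain ⟨hz1, hz2⟩ := hz
      have h1 : asymLoss k₁ k₂ (z + c) = k₁ * (z + c) := if_pos (by linarith)
      have h2 : |z / b| = -(z / b) := abs_of_nonpos (div_nonpos_of_nonpos_of_nonneg hz2 hb.le)
      simp only [hg, h1, h2]
      rw [show -(-(z / b)) = (1 / b) * z by field_simp]
      ring
    rw [intervalIntegral.integral_congr heq3]
    have hd : ∀ x ∈ uIcc (-c) (0:ℝ),
        HasDerivAt (fun z => (k₁ * (2 * b)⁻¹ * b * z + k₁ * (2 * b)⁻¹ * b * (c - b)) *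
          Real.exp ((1 / b) * z)) (k₁ * (2 * b)⁻¹ * (x + c) * Real.exp ((1 / b) * x)) x := by
      intro x _
      have h := hasDerivAt_linexp (k₁ * (2 * b)⁻¹ * b) (k₁ * (2 * b)⁻¹ * b * (c - b)) (1 / b) x
      have he : (k₁ * (2 * b)⁻¹ * b + (1 / b) * (k₁ * (2 * b)⁻¹ * b * x +
          k₁ * (2 * b)⁻¹ * b * (c - b))) = k₁ * (2 * b)⁻¹ * (x + c) := by
        field_simp
        ring
      rwa [he] at h
    have hii : IntervalIntegrable
        (fun z => k₁ * (2 * b)⁻¹ * (z + c) * Real.exp ((1 / b) * z)) volume (-c) 0 := by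
      apply Continuous.intervalIntegrable
      fun_prop
    rw [intervalIntegral.integral_eq_sub_of_hasDerivAt hd hii]
    ring_nf
  -- assemble
  have hIic : IntegrableOn g (Iic 0) := by
    rw [← Iic_union_Ioc_eq_Iic (by linarith : -c ≤ (0:ℝ))]
    exact hint2'.union hint3
  have hsplit : ∫ z in Iic (0:ℝ), g z = (∫ z in Iic (-c), g z) + ∫ z in Ioc (-c) 0, g z := by
    rw [← Iic_union_Ioc_eq_Iic (by linarith : -c ≤ (0:ℝ))]
    exact setIntegral_union (Iic_disjoint_Ioc le_rfl) measurableSet_Ioc hint2' hint3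
  have htotal : ∫ z, g z = ((∫ z in Iic (-c), g z) + ∫ z in Ioc (-c) 0, g z) +
      ∫ z in Ioi (0:ℝ), g z := by
    rw [← hsplit, intervalIntegral.integral_Iic_add_Ioi hIic hint1']
  rw [htotal, hval1', hval2', hval3]
  -- final arithmetic
  have hL : asymLoss k₁ k₂ c = k₁ * c := if_pos hc
  have hA : |c / b| = c / b := abs_of_nonneg (div_nonneg hc hb.le)
  rw [hL, hA]
  rw [show -(1 / b) * (0:ℝ) = 0 by ring, show (1 / b) * (0:ℝ) = 0 by ring,
    show (1 / b) * (-c) = -(1 / b) * c by ring, Real.exp_zero,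
    show -(c / b) = -(1 / b) * c by field_simp]
  field_simp
  ring

theorem expected_shifted_loss_laplace (b k₁ k₂ : ℝ) (hb : 0 < b)
    (hk₁ : 0 < k₁) (hk₂ : 0 < k₂) (c : ℝ)
    (f : ℝ → ℝ) (hf : ∀ z, f z = (2 * b)⁻¹ * Real.exp (-|z / b|)) :
    ∫ z, asymLoss k₁ k₂ (z + c) * f z =
      asymLoss k₁ k₂ c + (k₁ + k₂) * b / 2 * Real.exp (-|c / b|) := by
  simp only [hf]
  rcases le_or_gt 0 c with hc | hc
  · exact laplace_loss_nonneg b k₁ k₂ hb hk₁.le hk₂.le c hc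
  · have key := laplace_loss_nonneg b k₂ k₁ hb hk₂.le hk₁.le (-c) (by linarith)
    have hrefl : ∫ z, asymLoss k₁ k₂ (z + c) * ((2 * b)⁻¹ * Real.exp (-|z / b|)) =
        ∫ z, asymLoss k₂ k₁ (z + -c) * ((2 * b)⁻¹ * Real.exp (-|z / b|)) := by
      rw [← integral_neg_eq_self (fun z => asymLoss k₂ k₁ (z + -c) *
        ((2 * b)⁻¹ * Real.exp (-|z / b|))) volume]
      congr 1
      funext z
      have h1 : asymLoss k₂ k₁ (-z + -c) = asymLoss k₁ k₂ (z + c) := by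
        rw [show -z + -c = -(z + c) by ring, asymLoss_neg]
      have h2 : |(-z) / b| = |z / b| := by rw [neg_div, abs_neg]
      rw [h1, h2]
    rw [hrefl, key, asymLoss_neg, show -c / b = -(c / b) by ring, abs_neg]
    ring_nf
end
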